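/- If c − a − b > 0 and c is not a nonpositive integer, then the hypergeometric series F(a,b;c;1) converges and F(a,b;c;1) = Γ(c)Γ(c−a−b)/(Γ(c−a)Γ(c−b)). -/

import Mathlib

set_option maxHeartbeats 1000000

open Filter Topology

noncomputable def PP (x : ℝ) (k : ℕ) : ℝ := ∏ i ∈ Finset.range k, (x + i)

noncomputable def tm (a b c : ℝ) (k : ℕ) : ℝ :=
  PP a k * PP b k / (PP c k * (Nat.factorial k : ℝ))

lemma PP_zero (x : ℝ) : PP x 0 = 1 := by simp [PP]

lemma PP_succ (x : ℝ) (k : ℕ) : PP x (k + 1) = PP x k * (x + k) := by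
  simp [PP, Finset.prod_range_succ]

lemma PP_succ' (x : ℝ) (k : ℕ) : PP x (k + 1) = x * PP (x + 1) k := by
  rw [PP, Finset.prod_range_succ', PP]
  simp only [Nat.cast_zero, add_zero, mul_comm]
  congr 1
  exact Finset.prod_congr rfl fun i _ => by push_cast; ring

lemma PP_pos {x : ℝ} (hx : 0 < x) (k : ℕ) : 0 < PP x k :=
  Finset.prod_pos fun i _ => by positivity

lemma PP_ne_zero {x : ℝ} (hx : ∀ i : ℕ, x + i ≠ 0) (k : ℕ) : PP x k ≠ 0 :=
  Finset.prod_ne_zero_iff.2 fun i _ => hx i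

lemma abs_PP_le (x : ℝ) (k : ℕ) : |PP x k| ≤ PP (|x| + 1) k := by
  rw [PP, PP, Finset.abs_prod]
  refine Finset.prod_le_prod (fun i _ => abs_nonneg _) fun i _ => ?_
  calc |x + (i:ℝ)| ≤ |x| + i := by
        refine (abs_add_le _ _).trans ?_
        simp [Nat.abs_cast]
    _ ≤ |x| + 1 + i := by linarith

lemma tm_zero (a b c : ℝ) : tm a b c 0 = 1 := by simp [tm, PP_zero]

lemma tm_succ {c : ℝ} (hc : ∀ i : ℕ, c + i ≠ 0) (a b : ℝ) (k : ℕ) :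
    tm a b c (k + 1) = tm a b c k * ((a + k) * (b + k) / ((c + k) * (k + 1))) := by
  have h1 : PP c k ≠ 0 := PP_ne_zero hc k
  have h2 : (c + k) ≠ 0 := hc k
  have h3 : ((k : ℝ) + 1) ≠ 0 := by positivity
  have h4 : (Nat.factorial k : ℝ) ≠ 0 := Nat.cast_ne_zero.2 (Nat.factorial_ne_zero k)
  rw [tm, tm, PP_succ, PP_succ, PP_succ, Nat.factorial_succ]
  push_cast
  field_simp

lemma poly_eventually (M β γ : ℝ) (hM : 0 < M) :
    ∃ K : ℕ, ∀ k : ℕ, K ≤ k → 0 ≤ M * (k:ℝ)^2 + β * k + γ := by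
  refine ⟨⌈(|β| + |γ|) / M⌉₊ + 1, fun k hk => ?_⟩
  have hk1 : (1:ℝ) ≤ (k:ℝ) := by exact_mod_cast Nat.one_le_iff_ne_zero.2 (by omega)
  have hk2 : (|β| + |γ|) / M ≤ (k:ℝ) := by
    calc (|β| + |γ|) / M ≤ (⌈(|β| + |γ|) / M⌉₊ : ℝ) := Nat.le_ceil _
      _ ≤ (k:ℝ) := by exact_mod_cast le_trans (Nat.le_succ _) hk
  have h3 : |β| + |γ| ≤ M * (k:ℝ) := by
    rw [div_le_iff₀ hM] at hk2; linarith [hk2]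
  nlinarith [neg_abs_le β, neg_abs_le γ, abs_nonneg β, abs_nonneg γ]

/-- Main decay bound: eventually `|tm a b c k| ≤ C * (k+1) ^ (-(1+δ))` with
`δ = min (c-a-b) 1 / 2`. -/
lemma tm_bound (a b c : ℝ) (h : 0 < c - a - b) (hc : ∀ i : ℕ, c + i ≠ 0) :
    ∃ C : ℝ, 0 ≤ C ∧ ∃ K : ℕ, ∀ k : ℕ, K ≤ k →
      |tm a b c k| ≤ C * ((k:ℝ) + 1) ^ (-(1 + min (c - a - b) 1 / 2)) := by
  set δ : ℝ := min (c - a - b) 1 / 2 with hδdef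
  have hδ0 : 0 < δ := by
    have := lt_min h one_pos; positivity
  have hδ1 : δ ≤ 1/2 := by
    have : min (c - a - b) 1 ≤ 1 := min_le_right _ _
    rw [hδdef]; linarith
  have hδs : δ < c - a - b := by
    rcases le_or_gt (c - a - b) 1 with h1 | h1
    · have : min (c - a - b) 1 = c - a - b := min_eq_left h1
      rw [hδdef, this]; linarith
    · have : min (c - a - b) 1 = 1 := min_eq_right h1.le
      rw [hδdef, this]; linarith
  set p : ℝ := 1 + δ with hpdef
  -- the cubic inequality eventually
  obtain ⟨K₀, hK₀⟩ := poly_eventually (c - a - b - δ)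
    (1 - δ + 2*c - c*δ - a*b - 2*a - 2*b) (c - c*δ - 2*a*b) (by linarith)
  -- K must also ensure positivity of a+k, b+k, c+k
  obtain ⟨K₁, hK₁⟩ := exists_nat_gt (max (max (-a) (-b)) (-c))
  set K := max K₀ K₁ with hKdef
  have hpos : ∀ k : ℕ, K ≤ k → 0 < a + k ∧ 0 < b + k ∧ 0 < c + k := by
    intro k hk
    have hKk : (K₁ : ℝ) ≤ k := by exact_mod_cast le_trans (le_max_right _ _) hk
    have h1 := lt_of_le_of_lt (le_max_left (-a) (-b)) (lt_of_le_of_lt (le_max_left _ (-c)) hK₁)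
    have h2 := lt_of_le_of_lt (le_max_right (-a) (-b)) (lt_of_le_of_lt (le_max_left _ (-c)) hK₁)
    have h3 := lt_of_le_of_lt (le_max_right (max (-a) (-b)) (-c)) hK₁
    refine ⟨by linarith, by linarith, by linarith⟩
  -- key ratio estimate
  have hstep : ∀ k : ℕ, K ≤ k →
      |tm a b c (k + 1)| * ((k:ℝ) + 2) ^ p ≤ |tm a b c k| * ((k:ℝ) + 1) ^ p := by
    intro k hk
    obtain ⟨ha, hb, hcpos⟩ := hpos k hk
    have hk1 : (0:ℝ) < (k:ℝ) + 1 := by positivity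
    have hk2 : (0:ℝ) < (k:ℝ) + 2 := by positivity
    have hr : |tm a b c (k+1)| = |tm a b c k| * ((a + k) * (b + k) / ((c + k) * ((k:ℝ) + 1))) := by
      rw [tm_succ hc, abs_mul]
      congr 1
      exact abs_of_nonneg (by positivity)
    -- cubic inequality
    have hcub : (a + k) * (b + k) * ((k:ℝ) + 2) ≤ (c + k) * ((k:ℝ)+1) * ((k:ℝ)+1-δ) := by
      have := hK₀ k (le_trans (le_max_left _ _) hk)
      nlinarith [this]
    -- ratio ≤ 1 - p/(k+2)
    have hratio : (a + k) * (b + k) / ((c + k) * ((k:ℝ) + 1)) ≤ 1 - p/((k:ℝ)+2) := by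
      rw [div_le_iff₀ (by positivity)]
      have : (1 - p/((k:ℝ)+2)) * ((c + k) * ((k:ℝ) + 1))
          = (c + k) * ((k:ℝ)+1) * (((k:ℝ)+2-p)/((k:ℝ)+2)) := by field_simp
      rw [this, ← sub_nonneg]
      have h22 : (c + k) * ((k:ℝ)+1) * (((k:ℝ)+2-p)/((k:ℝ)+2)) - (a + k) * (b + k)
          = ((c + k) * ((k:ℝ)+1) * ((k:ℝ)+1-δ) - (a + k) * (b + k) * ((k:ℝ)+2))/((k:ℝ)+2) := by
        rw [hpdef]; field_simp; ring
      rw [h22]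
      exact div_nonneg (by linarith) hk2.le
    -- Bernoulli
    have hbern : 1 - p/((k:ℝ)+2) ≤ (((k:ℝ)+1)/((k:ℝ)+2)) ^ p := by
      have hB := one_add_mul_self_le_rpow_one_add
        (s := -(1/((k:ℝ)+2))) (by rw [neg_le, neg_neg]; rw [div_le_one hk2]; linarith)
        (p := p) (by rw [hpdef]; linarith)
      have he : (1 + -(1/((k:ℝ)+2))) = ((k:ℝ)+1)/((k:ℝ)+2) := by field_simp; ring
      rw [he] at hB
      calc 1 - p/((k:ℝ)+2) = 1 + p * -(1/((k:ℝ)+2)) := by ring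
        _ ≤ _ := hB
    calc |tm a b c (k+1)| * ((k:ℝ) + 2) ^ p
        = |tm a b c k| * (((a + k) * (b + k) / ((c + k) * ((k:ℝ) + 1))) * ((k:ℝ) + 2) ^ p) := by
          rw [hr]; ring
      _ ≤ |tm a b c k| * ((((k:ℝ)+1)/((k:ℝ)+2)) ^ p * ((k:ℝ) + 2) ^ p) := by
          refine mul_le_mul_of_nonneg_left ?_ (abs_nonneg _)
          refine mul_le_mul_of_nonneg_right (le_trans hratio hbern) (by positivity)
      _ = |tm a b c k| * ((k:ℝ) + 1) ^ p := by
          rw [← Real.mul_rpow (by positivity) (by positivity)]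
          congr 2
          field_simp
    -- done
  -- antitone from K
  have hmono : ∀ m : ℕ, |tm a b c (K + m)| * ((K:ℝ) + m + 1) ^ p ≤ |tm a b c K| * ((K:ℝ) + 1) ^ p := by
    intro m
    induction m with
    | zero => simp
    | succ n ih =>
      refine le_trans ?_ ih
      have := hstep (K + n) (Nat.le_add_right _ _)
      have hcast : ((K + n : ℕ) : ℝ) = (K:ℝ) + n := by push_cast; ring
      rw [hcast] at this
      calc |tm a b c (K + (n+1))| * ((K:ℝ) + ↑(n+1) + 1) ^ p
          = |tm a b c ((K + n) + 1)| * (((K:ℝ) + n) + 2) ^ p := by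
            rw [show K + (n+1) = (K+n)+1 from rfl]; push_cast; ring_nf
        _ ≤ _ := this
  refine ⟨|tm a b c K| * ((K:ℝ) + 1) ^ p, by positivity, K, fun k hk => ?_⟩
  obtain ⟨m, rfl⟩ := Nat.exists_eq_add_of_le hk
  have h1 := hmono m
  have hcast : ((K + m : ℕ) : ℝ) = (K:ℝ) + m := by push_cast; ring
  have hk1 : (0:ℝ) < ((K + m : ℕ):ℝ) + 1 := by positivity
  rw [Real.rpow_neg hk1.le]
  rw [← hcast] at h1
  have hxp := Real.rpow_pos_of_pos hk1 p
  calc |tm a b c (K + m)|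
      = |tm a b c (K + m)| * (((K + m : ℕ):ℝ) + 1) ^ p * ((((K + m : ℕ):ℝ) + 1) ^ p)⁻¹ := by
        rw [mul_assoc, mul_inv_cancel₀ hxp.ne', mul_one]
    _ ≤ |tm a b c K| * ((K:ℝ) + 1) ^ p * ((((K + m : ℕ):ℝ) + 1) ^ p)⁻¹ :=
        mul_le_mul_of_nonneg_right h1 (inv_nonneg.2 hxp.le)

lemma summable_shift_rpow (q : ℝ) (hq : q < -1) (K : ℕ) :
    Summable (fun k : ℕ => ((k:ℝ) + K + 1) ^ q) := by
  have h0 : Summable (fun n : ℕ => ((n:ℝ)) ^ q) := Real.summable_nat_rpow.2 hq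
  have h1 : Summable (fun n : ℕ => (((n + (K+1) : ℕ) : ℝ)) ^ q) := by
    exact (summable_nat_add_iff (f := fun n : ℕ => (n:ℝ) ^ q) (K+1)).2 h0
  refine h1.congr fun n => ?_
  have : ((n + (K+1) : ℕ) : ℝ) = (n:ℝ) + K + 1 := by push_cast; ring
  rw [this]

lemma summable_tm (a b c : ℝ) (h : 0 < c - a - b) (hc : ∀ i : ℕ, c + i ≠ 0) :
    Summable (tm a b c) := by
  obtain ⟨C, hC0, K, hK⟩ := tm_bound a b c h hc
  set δ : ℝ := min (c - a - b) 1 / 2 with hδdef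
  have hδ0 : 0 < δ := by have := lt_min h one_pos; positivity
  rw [← summable_nat_add_iff (f := tm a b c) K]
  have hg : Summable (fun k : ℕ => C * ((k:ℝ) + K + 1) ^ (-(1+δ))) :=
    (summable_shift_rpow (-(1+δ)) (by linarith) K).mul_left C
  refine Summable.of_norm_bounded hg fun k => ?_
  have := hK (k + K) (Nat.le_add_left _ _)
  calc ‖tm a b c (k + K)‖ = |tm a b c (k + K)| := rfl
    _ ≤ C * (((k + K : ℕ):ℝ) + 1) ^ (-(1+δ)) := this
    _ = C * ((k:ℝ) + K + 1) ^ (-(1+δ)) := by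
        congr 2
        push_cast; ring

lemma tendsto_mul_tm (a b c : ℝ) (h : 0 < c - a - b) (hc : ∀ i : ℕ, c + i ≠ 0) :
    Filter.Tendsto (fun k : ℕ => (k:ℝ) * tm a b c k) atTop (𝓝 0) := by
  obtain ⟨C, hC0, K, hK⟩ := tm_bound a b c h hc
  set δ : ℝ := min (c - a - b) 1 / 2 with hδdef
  have hδ0 : 0 < δ := by have := lt_min h one_pos; positivity
  have hg : Filter.Tendsto (fun k : ℕ => C * ((k:ℝ) + 1) ^ (-δ)) atTop (𝓝 0) := by
    have h1 : Filter.Tendsto (fun x : ℝ => x ^ (-δ)) atTop (𝓝 0) := tendsto_rpow_neg_atTop hδ0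
    have h2 : Filter.Tendsto (fun k : ℕ => (k:ℝ) + 1) atTop atTop :=
      tendsto_atTop_add_const_right _ 1 tendsto_natCast_atTop_atTop
    have := (h1.comp h2).const_mul C
    simpa using this
  refine squeeze_zero_norm' ?_ hg
  filter_upwards [Filter.eventually_atTop.2 ⟨K, fun k hk => hK k hk⟩] with k hk
  have hk1 : (0:ℝ) < (k:ℝ) + 1 := by positivity
  calc ‖(k:ℝ) * tm a b c k‖ = (k:ℝ) * |tm a b c k| := by
        rw [norm_mul]; simp [Nat.abs_cast]
    _ ≤ ((k:ℝ) + 1) * (C * ((k:ℝ) + 1) ^ (-(1+δ))) := by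
        refine mul_le_mul (by linarith) hk (abs_nonneg _) (by linarith)
    _ = C * (((k:ℝ) + 1) * (((k:ℝ) + 1) ^ (-(1:ℝ)) * ((k:ℝ) + 1) ^ (-δ))) := by
        rw [← Real.rpow_add hk1]; ring_nf
    _ = C * ((k:ℝ) + 1) ^ (-δ) := by
        rw [Real.rpow_neg_one, mul_inv_cancel_left₀ hk1.ne']

lemma tm_c_succ {c : ℝ} (hc : ∀ i : ℕ, c + i ≠ 0) (a b : ℝ) (k : ℕ) :
    tm a b (c+1) k = tm a b c k * (c / (c + k)) := by
  have hshift : PP (c+1) k * c = PP c k * (c + k) := by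
    induction k with
    | zero => simp [PP_zero]
    | succ n ih =>
      rw [PP_succ, PP_succ]
      push_cast
      have : PP (c+1) n * (c + 1 + n) * c = (PP (c+1) n * c) * (c + 1 + n) := by ring
      rw [this, ih]
      ring
  have h0 : c ≠ 0 := by have := hc 0; simpa using this
  have hk : c + (k:ℝ) ≠ 0 := hc k
  have hPc : PP c k ≠ 0 := PP_ne_zero hc k
  have hPc1 : PP (c+1) k ≠ 0 := PP_ne_zero (fun i => by
    have h' := hc (i+1); push_cast at h'; intro hx; exact h' (by linarith)) k
  have hfac : (Nat.factorial k : ℝ) ≠ 0 := Nat.cast_ne_zero.2 (Nat.factorial_ne_zero k)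
  rw [tm, tm]
  rw [div_mul_div_comm]
  rw [div_eq_div_iff (by exact mul_ne_zero hPc1 hfac) (by
    exact mul_ne_zero (mul_ne_zero hPc hfac) hk)]
  -- PP a k * PP b k * (PP c k * k! * (c+k)) = PP a k * PP b k * c * (PP (c+1) k * k!)
  have : PP c k * (c + k) = PP (c+1) k * c := hshift.symm
  calc PP a k * PP b k * (PP c k * ↑(Nat.factorial k) * (c + ↑k))
      = PP a k * PP b k * ((PP c k * (c + ↑k)) * ↑(Nat.factorial k)) := by ring
    _ = PP a k * PP b k * ((PP (c+1) k * c) * ↑(Nat.factorial k)) := by rw [this]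
    _ = PP a k * PP b k * c * (PP (c + 1) k * ↑(Nat.factorial k)) := by ring

lemma telescope_term {c : ℝ} (hc : ∀ i : ℕ, c + i ≠ 0) (a b : ℝ) (k : ℕ) :
    c * (c - a - b) * tm a b c k - (c - a) * (c - b) * tm a b (c+1) k
      = c * ((k:ℝ) * tm a b c k - ((k:ℝ) + 1) * tm a b c (k+1)) := by
  rw [tm_c_succ hc, tm_succ hc]
  have hk : c + (k:ℝ) ≠ 0 := hc k
  have hk1 : ((k:ℝ) + 1) ≠ 0 := by positivity
  field_simp
  ring

lemma contiguous (a b c : ℝ) (h : 0 < c - a - b) (hc : ∀ i : ℕ, c + i ≠ 0) :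
    (∑' k, tm a b c k) = ((c - a) * (c - b)) / (c * (c - a - b)) * ∑' k, tm a b (c+1) k := by
  have hc1 : ∀ i : ℕ, (c + 1) + i ≠ 0 := fun i => by
    have h' := hc (i+1); push_cast at h'; intro hx; exact h' (by linarith)
  have hS : Summable (tm a b c) := summable_tm a b c h hc
  have hS1 : Summable (tm a b (c+1)) := summable_tm a b (c+1) (by linarith) hc1
  set S := ∑' k, tm a b c k
  set S' := ∑' k, tm a b (c+1) k
  -- the combination sums to 0
  have hcomb : Summable (fun k => c * (c - a - b) * tm a b c k - (c - a) * (c - b) * tm a b (c+1) k) :=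
    (hS.mul_left _).sub (hS1.mul_left _)
  have hsum0 : (∑' k, (c * (c - a - b) * tm a b c k - (c - a) * (c - b) * tm a b (c+1) k)) = 0 := by
    have hhs := hcomb.hasSum
    have hps := hhs.tendsto_sum_nat
    -- partial sums telescope
    have hpartial : ∀ N : ℕ, (∑ k ∈ Finset.range N,
        (c * (c - a - b) * tm a b c k - (c - a) * (c - b) * tm a b (c+1) k))
          = - (c * ((N:ℝ) * tm a b c N)) := by
      intro N
      set f : ℕ → ℝ := fun j => c * ((j:ℝ) * tm a b c j) with hf
      have hstep : ∀ k, c * (c - a - b) * tm a b c k - (c - a) * (c - b) * tm a b (c+1) k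
          = f k - f (k+1) := by
        intro k
        have hT := telescope_term hc a b k
        rw [hf]
        simp only []
        push_cast
        linarith [hT]
      rw [Finset.sum_congr rfl (fun k _ => hstep k), Finset.sum_range_sub']
      simp [hf]
    have hps2 : Filter.Tendsto (fun N : ℕ => - (c * ((N:ℝ) * tm a b c N))) atTop
        (𝓝 (∑' k, (c * (c - a - b) * tm a b c k - (c - a) * (c - b) * tm a b (c+1) k))) := by
      refine hps.congr fun N => ?_
      exact hpartial N
    have hzero : Filter.Tendsto (fun N : ℕ => - (c * ((N:ℝ) * tm a b c N))) atTop (𝓝 0) := by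
      have := (tendsto_mul_tm a b c h hc).const_mul c
      simpa using this.neg
    exact tendsto_nhds_unique hps2 hzero
  rw [Summable.tsum_sub (hS.mul_left _) (hS1.mul_left _), tsum_mul_left, tsum_mul_left] at hsum0
  have hcc : c * (c - a - b) ≠ 0 := by
    have h0 : c ≠ 0 := by have := hc 0; simpa using this
    exact mul_ne_zero h0 (by linarith)
  rw [sub_eq_zero] at hsum0
  rw [div_mul_eq_mul_div, eq_div_iff hcc]
  calc S * (c * (c - a - b)) = c * (c - a - b) * S := by ring
    _ = (c - a) * (c - b) * S' := hsum0

lemma iterate_contiguous (a b c : ℝ) (h : 0 < c - a - b) (hc : ∀ i : ℕ, c + i ≠ 0) (n : ℕ) :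
    (∑' k, tm a b c k) = (∏ j ∈ Finset.range n, ((c + j - a) * (c + j - b)) / ((c + j) * (c + j - a - b)))
      * ∑' k, tm a b (c + n) k := by
  induction n with
  | zero => simp
  | succ m ih =>
    have hm : 0 < (c + m) - a - b := by have : (0:ℝ) ≤ m := Nat.cast_nonneg m; linarith
    have hcm : ∀ i : ℕ, (c + m) + i ≠ 0 := fun i => by
      have h' := hc (m + i); push_cast at h'; intro hx; exact h' (by linarith)
    have hcont := contiguous a b (c + m) hm hcm
    have hcast : (c + (m:ℝ)) + 1 = c + ((m+1 : ℕ):ℝ) := by push_cast; ring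
    rw [hcast] at hcont
    rw [ih, hcont, Finset.prod_range_succ]
    ring

lemma tail_tendsto_one (a b c : ℝ) (h : 0 < c - a - b) (hc : ∀ i : ℕ, c + i ≠ 0) :
    Filter.Tendsto (fun n : ℕ => ∑' k, tm a b (c + n) k) atTop (𝓝 1) := by
  -- choose n₀
  obtain ⟨n₀, hn₀⟩ := exists_nat_gt (max (-c) (|a| + |b| + 3 - c))
  have hc0 : (0:ℝ) < c + n₀ := by
    have := lt_of_le_of_lt (le_max_left (-c) _) hn₀; linarith
  have hAB : 0 < (c + n₀) - (|a| + 1) - (|b| + 1) := by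
    have := lt_of_le_of_lt (le_max_right (-c) _) hn₀; linarith
  have hcn₀ : ∀ i : ℕ, (c + n₀) + i ≠ 0 := fun i => by
    have : (0:ℝ) ≤ i := Nat.cast_nonneg i; positivity
  set W : ℕ → ℝ := tm (|a| + 1) (|b| + 1) (c + n₀) with hW
  have hWsum : Summable W := summable_tm _ _ _ hAB hcn₀
  have hWsum1 : Summable (fun k => W (k + 1)) := by
    exact (summable_nat_add_iff (f := W) 1).2 hWsum
  have hWpos : ∀ k, 0 ≤ W k := by
    intro k
    rw [hW, tm]
    have p1 := PP_pos (show (0:ℝ) < |a| + 1 by positivity) k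
    have p2 := PP_pos (show (0:ℝ) < |b| + 1 by positivity) k
    have p3 := PP_pos hc0 k
    have p4 : (0:ℝ) < (Nat.factorial k : ℝ) := by exact_mod_cast Nat.factorial_pos k
    positivity
  set T : ℝ := ∑' k, W (k + 1) with hT
  have hT0 : 0 ≤ T := tsum_nonneg fun k => hWpos _
  -- per-term bound for n ≥ n₀
  have hptb : ∀ n : ℕ, n₀ ≤ n → ∀ k : ℕ,
      |tm a b (c + n) (k + 1)| ≤ ((c + n₀) / (c + n)) * W (k + 1) := by
    intro n hn k
    have hcn : (0:ℝ) < c + n := by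
      have : (n₀:ℝ) ≤ n := Nat.cast_le.2 hn
      linarith
    have hnum : |PP a (k+1)| * |PP b (k+1)| ≤ PP (|a|+1) (k+1) * PP (|b|+1) (k+1) := by
      refine mul_le_mul (abs_PP_le a _) (abs_PP_le b _) (abs_nonneg _) ?_
      exact (PP_pos (show (0:ℝ) < |a| + 1 by positivity) _).le
    have hden : ((c + n) / (c + n₀)) * PP (c + n₀) (k+1) ≤ PP (c + n) (k+1) := by
      rw [PP_succ', PP_succ']
      have h1 : PP (c + n₀ + 1) k ≤ PP (c + n + 1) k := by
        refine Finset.prod_le_prod (fun i _ => ?_) (fun i _ => ?_)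
        · have : (0:ℝ) ≤ i := Nat.cast_nonneg i; positivity
        · have : (n₀:ℝ) ≤ n := Nat.cast_le.2 hn
          linarith
      calc ((c + n) / (c + n₀)) * ((c + n₀) * PP (c + n₀ + 1) k)
          = (c + n) * PP (c + n₀ + 1) k := by field_simp
        _ ≤ (c + n) * PP (c + n + 1) k := by
            exact mul_le_mul_of_nonneg_left h1 hcn.le
    have hdpos : (0:ℝ) < PP (c + n) (k+1) := PP_pos hcn _
    have hd0pos : (0:ℝ) < PP (c + n₀) (k+1) := PP_pos hc0 _
    have hfpos : (0:ℝ) < (Nat.factorial (k+1) : ℝ) := by exact_mod_cast Nat.factorial_pos _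
    have habs : |tm a b (c + n) (k+1)|
        = |PP a (k+1)| * |PP b (k+1)| / (PP (c + n) (k+1) * (Nat.factorial (k+1) : ℝ)) := by
      rw [tm, abs_div, abs_mul, abs_mul]
      rw [abs_of_pos hdpos, abs_of_pos hfpos]
    have hr : (0:ℝ) < (c + n) / (c + n₀) := by positivity
    have hstep1 : |tm a b (c + n) (k+1)| ≤
        (PP (|a|+1) (k+1) * PP (|b|+1) (k+1)) /
          ((((c + n) / (c + n₀)) * PP (c + n₀) (k+1)) * (Nat.factorial (k+1) : ℝ)) := by
      rw [habs]
      have p1 := PP_pos (show (0:ℝ) < |a| + 1 by positivity) (k+1)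
      have p2 := PP_pos (show (0:ℝ) < |b| + 1 by positivity) (k+1)
      refine div_le_div₀ (by positivity) hnum (by positivity) ?_
      exact mul_le_mul_of_nonneg_right hden hfpos.le
    refine hstep1.trans (le_of_eq ?_)
    rw [hW, tm]
    field_simp
  -- conclude the limit
  have hbound : ∀ n : ℕ, n₀ ≤ n → |(∑' k, tm a b (c + n) k) - 1| ≤ ((c + n₀) * T) / (c + n) := by
    intro n hn
    have hcn : (0:ℝ) < c + n := by
      have : (n₀:ℝ) ≤ n := Nat.cast_le.2 hn
      linarith
    have hcnn : ∀ i : ℕ, (c + n) + i ≠ 0 := fun i => by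
      have : (0:ℝ) ≤ i := Nat.cast_nonneg i; positivity
    have hcnh : 0 < (c + n) - a - b := by
      have : (0:ℝ) ≤ n := Nat.cast_nonneg n; linarith
    have hsumn : Summable (tm a b (c + n)) := summable_tm _ _ _ hcnh hcnn
    have hsplit : (∑' k, tm a b (c + n) k) = 1 + ∑' k, tm a b (c + n) (k + 1) := by
      rw [Summable.tsum_eq_zero_add hsumn, tm_zero]
    have hsumn1 : Summable (fun k => tm a b (c + n) (k+1)) :=
      (summable_nat_add_iff (f := tm a b (c+n)) 1).2 hsumn
    rw [hsplit]
    have h1 : |1 + (∑' k, tm a b (c + n) (k+1)) - 1| = |∑' k, tm a b (c + n) (k+1)| := by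
      congr 1; ring
    rw [h1]
    have habs_sum : Summable (fun k => |tm a b (c + n) (k+1)|) := hsumn1.abs
    calc |∑' k, tm a b (c + n) (k+1)| ≤ ∑' k, |tm a b (c + n) (k+1)| := by
          have hnorm := norm_tsum_le_tsum_norm (f := fun k => tm a b (c + n) (k+1))
            (by simpa [Real.norm_eq_abs] using habs_sum)
          simpa [Real.norm_eq_abs] using hnorm
      _ ≤ ∑' k, ((c + n₀) / (c + n)) * W (k+1) := by
          refine Summable.tsum_le_tsum (fun k => hptb n hn k) habs_sum ?_
          exact hWsum1.mul_left _
      _ = ((c + n₀) / (c + n)) * T := by rw [tsum_mul_left]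
      _ = ((c + n₀) * T) / (c + n) := by ring
  -- squeeze
  have hg : Filter.Tendsto (fun n : ℕ => ((c + n₀) * T) / (c + n)) atTop (𝓝 0) := by
    refine Filter.Tendsto.div_atTop tendsto_const_nhds ?_
    exact tendsto_atTop_add_const_left _ c tendsto_natCast_atTop_atTop
  have hz : Filter.Tendsto (fun n : ℕ => (∑' k, tm a b (c + n) k) - 1) atTop (𝓝 0) := by
    refine squeeze_zero_norm' ?_ hg
    filter_upwards [Filter.eventually_atTop.2 ⟨n₀, fun n hn => hbound n hn⟩] with n hn
    exact hn
  have := hz.add_const 1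
  simpa using this

lemma prod_eq_PP (a b c : ℝ) (m : ℕ) :
    (∏ j ∈ Finset.range m, ((c + j - a) * (c + j - b)) / ((c + j) * (c + j - a - b)))
      = (PP (c - a) m * PP (c - b) m) / (PP c m * PP (c - a - b) m) := by
  rw [PP, PP, PP, PP, ← Finset.prod_mul_distrib, ← Finset.prod_mul_distrib,
    ← Finset.prod_div_distrib]
  refine Finset.prod_congr rfl fun j _ => ?_
  ring

lemma prod_tendsto (a b c : ℝ) (h : 0 < c - a - b)
    (hc : ∀ i : ℕ, c + i ≠ 0) (hca : ∀ i : ℕ, (c - a) + i ≠ 0) (hcb : ∀ i : ℕ, (c - b) + i ≠ 0) :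
    Filter.Tendsto
      (fun n : ℕ => ∏ j ∈ Finset.range n, ((c + j - a) * (c + j - b)) / ((c + j) * (c + j - a - b)))
      atTop
      (𝓝 (Real.Gamma c * Real.Gamma (c - a - b) / (Real.Gamma (c - a) * Real.Gamma (c - b)))) := by
  have hs : ∀ i : ℕ, (c - a - b) + i ≠ 0 := fun i => by
    have : (0:ℝ) ≤ i := Nat.cast_nonneg i; positivity
  -- Gamma nonvanishing
  have hGa : Real.Gamma (c - a) ≠ 0 := Real.Gamma_ne_zero (fun m => by
    intro hx; exact hca m (by rw [hx]; ring))
  have hGb : Real.Gamma (c - b) ≠ 0 := Real.Gamma_ne_zero (fun m => by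
    intro hx; exact hcb m (by rw [hx]; ring))
  -- limit of the GammaSeq quotient
  have hGq : Filter.Tendsto
      (fun n : ℕ => Real.GammaSeq c n * Real.GammaSeq (c - a - b) n
        / (Real.GammaSeq (c - a) n * Real.GammaSeq (c - b) n)) atTop
      (𝓝 (Real.Gamma c * Real.Gamma (c - a - b) / (Real.Gamma (c - a) * Real.Gamma (c - b)))) := by
    exact Filter.Tendsto.div
      ((Real.GammaSeq_tendsto_Gamma c).mul (Real.GammaSeq_tendsto_Gamma (c - a - b)))
      ((Real.GammaSeq_tendsto_Gamma (c - a)).mul (Real.GammaSeq_tendsto_Gamma (c - b)))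
      (mul_ne_zero hGa hGb)
  -- identification for n ≥ 1
  have hGammaSeq_eq : ∀ (s : ℝ) (n : ℕ), Real.GammaSeq s n = (n:ℝ) ^ s * (Nat.factorial n : ℝ) / PP s (n + 1) := by
    intro s n
    rw [Real.GammaSeq, PP]
  have hid : ∀ n : ℕ, 1 ≤ n →
      (∏ j ∈ Finset.range (n+1), ((c + j - a) * (c + j - b)) / ((c + j) * (c + j - a - b)))
        = Real.GammaSeq c n * Real.GammaSeq (c - a - b) n
          / (Real.GammaSeq (c - a) n * Real.GammaSeq (c - b) n) := by
    intro n hn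
    have hn0 : (0:ℝ) < (n:ℝ) := by exact_mod_cast Nat.pos_of_ne_zero (by omega)
    have hA : ((n:ℝ) ^ c * (Nat.factorial n : ℝ)) * ((n:ℝ) ^ (c - a - b) * (Nat.factorial n : ℝ))
        = ((n:ℝ) ^ (c - a) * (Nat.factorial n : ℝ)) * ((n:ℝ) ^ (c - b) * (Nat.factorial n : ℝ)) := by
      rw [show ((n:ℝ) ^ c * (Nat.factorial n : ℝ)) * ((n:ℝ) ^ (c - a - b) * (Nat.factorial n : ℝ))
          = ((n:ℝ) ^ c * (n:ℝ) ^ (c - a - b)) * ((Nat.factorial n : ℝ) * (Nat.factorial n : ℝ)) by ring,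
        show ((n:ℝ) ^ (c - a) * (Nat.factorial n : ℝ)) * ((n:ℝ) ^ (c - b) * (Nat.factorial n : ℝ))
          = ((n:ℝ) ^ (c - a) * (n:ℝ) ^ (c - b)) * ((Nat.factorial n : ℝ) * (Nat.factorial n : ℝ)) by ring,
        ← Real.rpow_add hn0, ← Real.rpow_add hn0]
      congr 2
      ring
    have hPc : PP c (n+1) ≠ 0 := PP_ne_zero hc _
    have hPs : PP (c - a - b) (n+1) ≠ 0 := PP_ne_zero hs _
    have hPca : PP (c - a) (n+1) ≠ 0 := PP_ne_zero hca _
    have hPcb : PP (c - b) (n+1) ≠ 0 := PP_ne_zero hcb _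
    have hAca : (n:ℝ) ^ (c - a) * (Nat.factorial n : ℝ) ≠ 0 := by
      have := Real.rpow_pos_of_pos hn0 (c - a)
      have hf : (0:ℝ) < (Nat.factorial n : ℝ) := by exact_mod_cast Nat.factorial_pos n
      positivity
    have hAcb : (n:ℝ) ^ (c - b) * (Nat.factorial n : ℝ) ≠ 0 := by
      have := Real.rpow_pos_of_pos hn0 (c - b)
      have hf : (0:ℝ) < (Nat.factorial n : ℝ) := by exact_mod_cast Nat.factorial_pos n
      positivity
    rw [prod_eq_PP, hGammaSeq_eq, hGammaSeq_eq, hGammaSeq_eq, hGammaSeq_eq]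
    rw [div_mul_div_comm, div_mul_div_comm, div_div_div_eq]
    rw [hA]
    rw [mul_comm ((n:ℝ) ^ (c - a) * (Nat.factorial n:ℝ) * ((n:ℝ) ^ (c - b) * (Nat.factorial n:ℝ)))
      (PP (c - a) (n+1) * PP (c - b) (n+1)),
      mul_div_mul_right _ _ (mul_ne_zero hAca hAcb)]
  -- conclude
  have h1 : Filter.Tendsto
      (fun n : ℕ => ∏ j ∈ Finset.range (n+1), ((c + j - a) * (c + j - b)) / ((c + j) * (c + j - a - b)))
      atTop
      (𝓝 (Real.Gamma c * Real.Gamma (c - a - b) / (Real.Gamma (c - a) * Real.Gamma (c - b)))) := by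
    refine hGq.congr' ?_
    filter_upwards [Filter.eventually_ge_atTop 1] with n hn
    exact (hid n hn).symm
  exact (Filter.tendsto_add_atTop_iff_nat 1).1 h1


open MeasureTheory intervalIntegral

/-- The Gauss hypergeometric series `F(a,b;c;z) = Σ_k (a)_k (b)_k z^k / ((c)_k k!)`. -/
noncomputable def hyperF (a b c z : ℝ) : ℝ :=
  ∑' k : ℕ,
    ((∏ i ∈ Finset.range k, (a + i)) * (∏ i ∈ Finset.range k, (b + i)) /
        ((∏ i ∈ Finset.range k, (c + i)) * (Nat.factorial k : ℝ))) * z ^ k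

/-- Gauss's summation theorem: if `c − a − b > 0` and none of `c`, `c−a`,
`c−b` is a nonpositive integer, then the hypergeometric series at `z = 1` converges and
`F(a,b;c;1) = Γ(c)Γ(c−a−b)/(Γ(c−a)Γ(c−b))`. -/
theorem gauss_summation (a b c : ℝ) (h : 0 < c - a - b)
    (hc : ¬∃ k : ℕ, c = -(k : ℝ))
    (hca : ¬∃ k : ℕ, c - a = -(k : ℝ))
    (hcb : ¬∃ k : ℕ, c - b = -(k : ℝ)) :
    (Summable fun k : ℕ =>
        ((∏ i ∈ Finset.range k, (a + i)) * (∏ i ∈ Finset.range k, (b + i)) /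
            ((∏ i ∈ Finset.range k, (c + i)) * (Nat.factorial k : ℝ))) * (1 : ℝ) ^ k) ∧
    hyperF a b c 1
      = Real.Gamma c * Real.Gamma (c - a - b) /
          (Real.Gamma (c - a) * Real.Gamma (c - b)) := by
  have hc' : ∀ i : ℕ, c + i ≠ 0 := fun i hx => hc ⟨i, by linarith⟩
  have hca' : ∀ i : ℕ, (c - a) + i ≠ 0 := fun i hx => hca ⟨i, by linarith⟩
  have hcb' : ∀ i : ℕ, (c - b) + i ≠ 0 := fun i hx => hcb ⟨i, by linarith⟩
  have hsum : Summable (tm a b c) := summable_tm a b c h hc'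
  have htermeq : ∀ k : ℕ,
      tm a b c k = ((∏ i ∈ Finset.range k, (a + i)) * (∏ i ∈ Finset.range k, (b + i)) /
        ((∏ i ∈ Finset.range k, (c + i)) * (Nat.factorial k : ℝ))) * (1 : ℝ) ^ k := by
    intro k
    rw [one_pow, mul_one, tm, PP, PP, PP]
  constructor
  · exact hsum.congr htermeq
  · have hFeq : hyperF a b c 1 = ∑' k, tm a b c k := by
      rw [hyperF]
      exact (tsum_congr fun k => (htermeq k).symm)
    rw [hFeq]
    -- S c = Q n * S (c+n) for all n; take limits
    set G : ℝ := Real.Gamma c * Real.Gamma (c - a - b) / (Real.Gamma (c - a) * Real.Gamma (c - b))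
    have hQ := prod_tendsto a b c h hc' hca' hcb'
    have hTail := tail_tendsto_one a b c h hc'
    have hconst : Filter.Tendsto
        (fun n : ℕ => (∏ j ∈ Finset.range n, ((c + j - a) * (c + j - b)) / ((c + j) * (c + j - a - b)))
          * ∑' k, tm a b (c + n) k) atTop (𝓝 (G * 1)) := hQ.mul hTail
    have hconst2 : Filter.Tendsto (fun _ : ℕ => ∑' k, tm a b c k) atTop (𝓝 (∑' k, tm a b c k)) :=
      tendsto_const_nhds
    have heq : (fun n : ℕ => (∏ j ∈ Finset.range n, ((c + j - a) * (c + j - b)) / ((c + j) * (c + j - a - b)))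
          * ∑' k, tm a b (c + n) k) = fun _ : ℕ => ∑' k, tm a b c k := by
      funext n
      exact (iterate_contiguous a b c h hc' n).symm
    rw [heq] at hconst
    have := tendsto_nhds_unique hconst2 hconst
    rw [this, mul_one]
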